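/- For every n ≥ 1 and any vertex w of K_{2n}, the tensor product K_{2n} × C_4 has Laplacian perfect pair state transfer at time π/2 between e_w ⊗ (e_0 − e_1) and e_w ⊗ (e_2 − e_3): there is a unit complex χ with U_{L_{K_{2n} × C_4}}(π/2)(e_w ⊗ (e_0 − e_1)) = χ e_w ⊗ (e_2 − e_3). -/

import Mathlib

open Matrix Complex Kronecker

/-- transition matrix `U_M(t) = exp(-itM)` -/
noncomputable def U {V : Type*} [Fintype V] [DecidableEq V] (M : Matrix V V ℂ) (t : ℝ) :
    Matrix V V ℂ :=
  NormedSpace.exp ((-(Complex.I * (t : ℂ))) • M)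

/-- standard basis vector -/
noncomputable def e {V : Type*} [DecidableEq V] (v : V) : V → ℂ := Pi.single v 1

/-- Kronecker product of vectors -/
def vecKron {α β : Type*} (u : α → ℂ) (v : β → ℂ) : α × β → ℂ := fun p => u p.1 * v p.2
/-- adjacency matrix of the cycle C₄ with vertices 0,1,2,3 in cyclic order -/
def AC4 : Matrix (Fin 4) (Fin 4) ℂ := !![0,1,0,1; 1,0,1,0; 0,1,0,1; 1,0,1,0]

lemma pow_mulVec_eigen {V : Type*} [Fintype V] [DecidableEq V]
    (M : Matrix V V ℂ) (z : V → ℂ) (μ : ℂ) (h : M *ᵥ z = μ • z) (k : ℕ) :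
    (M ^ k) *ᵥ z = (μ ^ k) • z := by
  induction k with
  | zero => simp
  | succ k ih =>
    rw [pow_succ, ← Matrix.mulVec_mulVec, h, Matrix.mulVec_smul, ih, smul_smul, pow_succ]
    ring_nf

lemma exp_mulVec_eigen {V : Type*} [Fintype V] [DecidableEq V]
    (M : Matrix V V ℂ) (z : V → ℂ) (μ : ℂ) (h : M *ᵥ z = μ • z) :
    NormedSpace.exp M *ᵥ z = Complex.exp μ • z := by
  letI : NormedRing (Matrix V V ℂ) := Matrix.linftyOpNormedRing
  letI : NormedAlgebra ℂ (Matrix V V ℂ) := Matrix.linftyOpNormedAlgebra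
  let ψ : Matrix V V ℂ →ₗ[ℂ] (V → ℂ) :=
    { toFun := fun N => N *ᵥ z
      map_add' := fun N₁ N₂ => Matrix.add_mulVec _ _ _
      map_smul' := fun r N => by simp [Matrix.smul_mulVec] }
  let φ : Matrix V V ℂ →L[ℂ] (V → ℂ) := ⟨ψ, ψ.continuous_of_finiteDimensional⟩
  have hφ : ∀ N, φ N = N *ᵥ z := fun _ => rfl
  rw [NormedSpace.exp_eq_tsum ℂ, ← hφ,
    φ.map_tsum (NormedSpace.expSeries_summable' (𝕂 := ℂ) M)]
  have : ∀ k : ℕ, φ (((k.factorial : ℂ))⁻¹ • M ^ k) = (((k.factorial : ℂ))⁻¹ * μ ^ k) • z := by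
    intro k
    rw [_root_.map_smul, hφ, pow_mulVec_eigen M z μ h k, smul_smul]
  simp_rw [this]
  have hs : Summable (fun k : ℕ => ((k.factorial : ℂ))⁻¹ * μ ^ k) := by
    simpa [smul_eq_mul] using NormedSpace.expSeries_summable' (𝕂 := ℂ) μ
  rw [hs.tsum_smul_const, Complex.exp_eq_exp_ℂ, NormedSpace.exp_eq_tsum ℂ]
  simp [smul_eq_mul]

lemma kron_mulVec {α β : Type*} [Fintype α] [Fintype β]
    (A : Matrix α α ℂ) (B : Matrix β β ℂ) (x : α → ℂ) (y : β → ℂ) :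
    (A ⊗ₖ B) *ᵥ vecKron x y = vecKron (A *ᵥ x) (B *ᵥ y) := by
  funext q
  obtain ⟨i, j⟩ := q
  simp only [vecKron, mulVec, dotProduct, kroneckerMap_apply, Fintype.sum_prod_type]
  rw [Finset.sum_mul_sum]
  apply Finset.sum_congr rfl
  intros
  apply Finset.sum_congr rfl
  intros
  ring

lemma top_mulVec {N : ℕ} (x : Fin N → ℂ) (i : Fin N) :
    (((⊤ : SimpleGraph (Fin N)).adjMatrix ℂ) *ᵥ x) i = (∑ j, x j) - x i := by
  have h : ∀ j, (if i ≠ j then (1:ℂ) else 0) * x j = x j - (if i = j then x j else 0) := by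
    intro j; by_cases h : i = j <;> simp [h]
  simp only [mulVec, dotProduct, SimpleGraph.adjMatrix_apply, SimpleGraph.top_adj, h,
    Finset.sum_sub_distrib, Finset.sum_ite_eq, Finset.mem_univ, if_true]

theorem stmt12 (n : ℕ) (hn : 1 ≤ n) (w : Fin (2 * n)) :
    ∃ χ : ℂ, ‖χ‖ = 1 ∧
      (U ((((2 * n - 1) * 2 : ℕ) : ℂ) •
              (1 : Matrix (Fin (2 * n) × Fin 4) (Fin (2 * n) × Fin 4) ℂ)
            - ((⊤ : SimpleGraph (Fin (2 * n))).adjMatrix ℂ) ⊗ₖ AC4) (Real.pi / 2)) *ᵥ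
          vecKron (e w) (e (0 : Fin 4) - e (1 : Fin 4))
        = χ • vecKron (e w) (e (2 : Fin 4) - e (3 : Fin 4)) := by
  have hn' : (1:ℕ) ≤ 2 * n := by omega
  have hnC : (n : ℂ) ≠ 0 := Nat.cast_ne_zero.2 (by omega)
  set t : ℝ := Real.pi / 2 with ht
  set A : Matrix (Fin (2*n)) (Fin (2*n)) ℂ := ((⊤ : SimpleGraph (Fin (2 * n))).adjMatrix ℂ) with hA
  set c : ℂ := (((2 * n - 1) * 2 : ℕ) : ℂ) with hcdef
  set M : Matrix (Fin (2 * n) × Fin 4) (Fin (2 * n) × Fin 4) ℂ :=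
    (-(Complex.I * (t : ℂ))) • (c • 1 - A ⊗ₖ AC4) with hM
  have hc : c = 2 * ((2 * n : ℂ) - 1) := by
    rw [hcdef, Nat.cast_mul, Nat.cast_sub hn']
    push_cast; ring
  set f : Fin (2*n) → ℂ := fun _ => 1 with hf
  set g : Fin (2*n) → ℂ := fun i => (2*n : ℂ) * (if i = w then 1 else 0) - 1 with hg
  set p : Fin 4 → ℂ := ![1,-1,1,-1] with hp
  set m : Fin 4 → ℂ := ![1,-1,-1,1] with hm
  have hAf : A *ᵥ f = ((2*n : ℂ) - 1) • f := by
    funext i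
    rw [hA, top_mulVec]
    simp [hf, Finset.card_univ]
  have hsumg : ∑ j, g j = 0 := by
    simp [hg, Finset.sum_sub_distrib, ← Finset.mul_sum, Finset.sum_ite_eq',
      Finset.card_univ, Finset.mem_univ]
  have hAg : A *ᵥ g = (-1 : ℂ) • g := by
    funext i
    rw [hA, top_mulVec, hsumg]
    simp
  have hBp : AC4 *ᵥ p = (-2 : ℂ) • p := by
    funext j
    fin_cases j <;>
      simp [AC4, hp, mulVec, dotProduct, Fin.sum_univ_four] <;> norm_num
  have hBm : AC4 *ᵥ m = (0 : ℂ) • m := by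
    funext j
    fin_cases j <;>
      simp [AC4, hm, mulVec, dotProduct, Fin.sum_univ_four] <;> norm_num
  have key : ∀ (a : Fin (2*n) → ℂ) (b : Fin 4 → ℂ) (α β : ℂ),
      A *ᵥ a = α • a → AC4 *ᵥ b = β • b →
      NormedSpace.exp M *ᵥ vecKron a b
        = Complex.exp (-(Complex.I * (t : ℂ)) * (c - α * β)) • vecKron a b := by
    intro a b α β ha hb
    apply exp_mulVec_eigen
    have hk : vecKron (α • a) (β • b) = (α * β) • vecKron a b := by
      funext q; simp [vecKron, Pi.smul_apply, smul_eq_mul]; ring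
    rw [hM, smul_mulVec, sub_mulVec, smul_mulVec, one_mulVec,
      kron_mulVec, ha, hb, hk, ← sub_smul, smul_smul]
  -- the four exponential values
  have htC : (t : ℂ) = (Real.pi : ℂ) / 2 := by rw [ht]; push_cast; ring
  have hχ1 : Complex.exp (-(Complex.I * (t : ℂ)) * (c - ((2*n : ℂ) - 1) * (-2))) = 1 := by
    have : -(Complex.I * (t : ℂ)) * (c - ((2*n : ℂ) - 1) * (-2))
        = ((1 - 2*(n:ℤ) : ℤ) : ℂ) * (2 * (Real.pi : ℂ) * Complex.I) := by
      rw [htC, hc]; push_cast; ring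
    rw [this]
    exact Complex.exp_int_mul_two_pi_mul_I _
  have hχ2 : Complex.exp (-(Complex.I * (t : ℂ)) * (c - ((2*n : ℂ) - 1) * 0)) = -1 := by
    have : -(Complex.I * (t : ℂ)) * (c - ((2*n : ℂ) - 1) * 0)
        = ((-(n:ℤ) : ℤ) : ℂ) * (2 * (Real.pi : ℂ) * Complex.I) + (Real.pi : ℂ) * Complex.I := by
      rw [htC, hc]; push_cast; ring
    rw [this, Complex.exp_add, Complex.exp_int_mul_two_pi_mul_I, Complex.exp_pi_mul_I]
    ring
  have hχ3 : Complex.exp (-(Complex.I * (t : ℂ)) * (c - (-1 : ℂ) * (-2))) = 1 := by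
    have : -(Complex.I * (t : ℂ)) * (c - (-1 : ℂ) * (-2))
        = ((1 - (n:ℤ) : ℤ) : ℂ) * (2 * (Real.pi : ℂ) * Complex.I) := by
      rw [htC, hc]; push_cast; ring
    rw [this]
    exact Complex.exp_int_mul_two_pi_mul_I _
  have hχ4 : Complex.exp (-(Complex.I * (t : ℂ)) * (c - (-1 : ℂ) * 0)) = -1 := by
    have : -(Complex.I * (t : ℂ)) * (c - (-1 : ℂ) * 0)
        = ((-(n:ℤ) : ℤ) : ℂ) * (2 * (Real.pi : ℂ) * Complex.I) + (Real.pi : ℂ) * Complex.I := by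
      rw [htC, hc]; push_cast; ring
    rw [this, Complex.exp_add, Complex.exp_int_mul_two_pi_mul_I, Complex.exp_pi_mul_I]
    ring
  have E1 := key f p _ _ hAf hBp
  have E2 := key f m _ _ hAf hBm
  have E3 := key g p _ _ hAg hBp
  have E4 := key g m _ _ hAg hBm
  rw [hχ1] at E1; rw [hχ2] at E2; rw [hχ3] at E3; rw [hχ4] at E4
  have hdecomp : vecKron (e w) (e (0 : Fin 4) - e (1 : Fin 4))
      = (1/(4*n:ℂ)) • vecKron f p + (1/(4*n:ℂ)) • vecKron f m
        + (1/(4*n:ℂ)) • vecKron g p + (1/(4*n:ℂ)) • vecKron g m := by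
    funext q
    obtain ⟨i, j⟩ := q
    rcases eq_or_ne i w with h | h <;> fin_cases j <;>
      simp [vecKron, e, Pi.single_apply, hf, hg, hp, hm, h] <;>
      field_simp <;> ring
  refine ⟨1, by simp, ?_⟩
  show NormedSpace.exp M *ᵥ vecKron (e w) (e (0 : Fin 4) - e (1 : Fin 4)) = _
  rw [hdecomp, Matrix.mulVec_add, Matrix.mulVec_add, Matrix.mulVec_add,
    Matrix.mulVec_smul, Matrix.mulVec_smul, Matrix.mulVec_smul, Matrix.mulVec_smul,
    E1, E2, E3, E4]
  funext q
  obtain ⟨i, j⟩ := q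
  rcases eq_or_ne i w with h | h <;> fin_cases j <;>
    simp [vecKron, e, Pi.single_apply, hf, hg, hp, hm, h] <;>
    field_simp <;> ring
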